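/- Let G be a 2-connected bipartite graph with bipartition X ⊔ Y and suppose every edge of G lies in a perfect matching. For any x ∈ X and y ∈ Y (adjacent or not), the induced subgraph G \ {x, y} obtained by deleting x and y has a perfect matching. -/

import Mathlib

attribute [local instance] Classical.propDecidable

/-- `X ⊔ Y` is a bipartition of the graph `G`. -/
def IsBipartition {V : Type*} (G : SimpleGraph V) [Fintype V] (X Y : Finset V) : Prop :=
  Disjoint X Y ∧ X ∪ Y = Finset.univ ∧
    ∀ x y : V, G.Adj x y → (x ∈ X ∧ y ∈ Y) ∨ (x ∈ Y ∧ y ∈ X)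

/-- `G` is connected and every edge of `G` lies in a perfect matching. -/
def MatchingCovered {V : Type*} (G : SimpleGraph V) : Prop :=
  G.Connected ∧ ∀ e ∈ G.edgeSet, ∃ M : G.Subgraph, M.IsPerfectMatching ∧ e ∈ M.edgeSet

/-- `G` is connected and remains connected after deleting any single vertex. -/
def TwoConnected {V : Type*} (G : SimpleGraph V) : Prop :=
  G.Connected ∧ ∀ v : V, (G.induce {u : V | u ≠ v}).Connected

/-- The neighborhood of the vertex set `A` in `G`. -/
noncomputable def nbhd {V : Type*} [Fintype V] (G : SimpleGraph V) (A : Finset V) : Finset V :=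
  Finset.univ.filter (fun y => ∃ x ∈ A, G.Adj x y)

/-- `T` is a tight subset: `|N_G(T)| = |T| + 1`. -/
def Tight {V : Type*} [Fintype V] (G : SimpleGraph V) (T : Finset V) : Prop :=
  (nbhd G T).card = T.card + 1

/-- `T ⊆ X` is an acceptable set of the bipartite graph `G` with bipartition `X ⊔ Y`:
the graph induced by the edges between `T` and `N_G(T)` is connected, and the induced
subgraph on `(X \ T) ⊔ (Y \ N_G(T))` is connected with at least one edge. -/
def Acceptable {V : Type*} [Fintype V] (G : SimpleGraph V) (X Y T : Finset V) : Prop :=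
  T.Nonempty ∧ T ⊆ X ∧
    (G.induce (↑(T ∪ nbhd G T) : Set V)).Connected ∧
    (G.induce (↑((X \ T) ∪ (Y \ nbhd G T)) : Set V)).Connected ∧
    ∃ x ∈ X \ T, ∃ y ∈ Y \ nbhd G T, G.Adj x y

set_option linter.unusedSectionVars false

open Finset

section Aux
variable {V : Type*} [Fintype V]

lemma mem_nbhd {G : SimpleGraph V} {A : Finset V} {v : V} :
    v ∈ nbhd G A ↔ ∃ x ∈ A, G.Adj x v := by
  simp [nbhd]

lemma walk_closed {G : SimpleGraph V} {S : Set V}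
    (hS : ∀ u w, u ∈ S → G.Adj u w → w ∈ S) {u v : V} (p : G.Walk u v) (hu : u ∈ S) :
    v ∈ S := by
  induction p with
  | nil => exact hu
  | cons h p ih => exact ih (hS _ _ hu h)

lemma partner {G : SimpleGraph V} {M : G.Subgraph} (hM : M.IsPerfectMatching) :
    ∃ p : V → V, ∀ v, M.Adj v (p v) ∧ ∀ w, M.Adj v w → w = p v := by
  choose p h1 h2 using fun v => SimpleGraph.Subgraph.isPerfectMatching_iff.mp hM v
  exact ⟨p, fun v => ⟨h1 v, h2 v⟩⟩

lemma adj_mem_Y {G : SimpleGraph V} {X Y : Finset V} (hbip : IsBipartition G X Y)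
    {u w : V} (h : G.Adj u w) (hu : u ∈ X) : w ∈ Y := by
  rcases hbip.2.2 u w h with ⟨_, hw⟩ | ⟨huY, _⟩
  · exact hw
  · exact absurd hu (Finset.disjoint_right.mp hbip.1 huY)

lemma nbhd_subset_Y {G : SimpleGraph V} {X Y : Finset V} (hbip : IsBipartition G X Y)
    {A : Finset V} (hA : A ⊆ X) : nbhd G A ⊆ Y := by
  intro v hv
  rcases mem_nbhd.mp hv with ⟨a, haA, hadj⟩
  exact adj_mem_Y hbip hadj (hA haA)

lemma card_X_eq_Y {G : SimpleGraph V} {X Y : Finset V} (hbip : IsBipartition G X Y)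
    {M : G.Subgraph} (hM : M.IsPerfectMatching) : X.card = Y.card := by
  obtain ⟨p, hp⟩ := partner hM
  have hinj : Function.Injective p := by
    intro a b hab
    have h1 : a = p (p a) := (hp (p a)).2 a (hp a).1.symm
    have h2 : b = p (p a) := by
      rw [hab]; exact (hp (p b)).2 b (hp b).1.symm
    rw [h1, h2]
  have hXY : ∀ v ∈ X, p v ∈ Y := fun v hv =>
    adj_mem_Y hbip (M.adj_sub (hp v).1) hv
  have hYX : ∀ v ∈ Y, p v ∈ X := by
    intro v hv
    rcases hbip.2.2 v (p v) (M.adj_sub (hp v).1) with ⟨hvX, _⟩ | ⟨_, h⟩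
    · exact absurd hv (Finset.disjoint_left.mp hbip.1 hvX)
    · exact h
  exact le_antisymm
    (Finset.card_le_card_of_injOn p hXY (hinj.injOn))
    (Finset.card_le_card_of_injOn p hYX (hinj.injOn))

lemma weak_hall {G : SimpleGraph V} {X Y : Finset V} (hbip : IsBipartition G X Y)
    {M : G.Subgraph} (hM : M.IsPerfectMatching) {A : Finset V} (hA : A ⊆ X) :
    A.card ≤ (nbhd G A).card := by
  obtain ⟨p, hp⟩ := partner hM
  have hinj : Function.Injective p := by
    intro a b hab
    have h1 : a = p (p a) := (hp (p a)).2 a (hp a).1.symm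
    have h2 : b = p (p a) := by
      rw [hab]; exact (hp (p b)).2 b (hp b).1.symm
    rw [h1, h2]
  exact Finset.card_le_card_of_injOn p
    (fun a ha => mem_nbhd.mpr ⟨a, ha, M.adj_sub (hp a).1⟩) hinj.injOn

end Aux

section Aux2
variable {V : Type*} [Fintype V]

lemma strict_hall {G : SimpleGraph V} {X Y : Finset V} (hbip : IsBipartition G X Y)
    (hconn : G.Connected)
    (hpm : ∀ e ∈ G.edgeSet, ∃ M : G.Subgraph, M.IsPerfectMatching ∧ e ∈ M.edgeSet)
    {M0 : G.Subgraph} (hM0 : M0.IsPerfectMatching)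
    {A : Finset V} (hA : A ⊆ X) (hne : A.Nonempty) (hproper : A ≠ X) :
    A.card + 1 ≤ (nbhd G A).card := by
  rcases Nat.lt_or_ge A.card (nbhd G A).card with h | h
  · omega
  have hcard : (nbhd G A).card = A.card := le_antisymm h (weak_hall hbip hM0 hA)
  exfalso
  -- S = A ∪ N(A) is closed under adjacency
  set S : Set V := ↑(A ∪ nbhd G A) with hS
  have hclosed : ∀ u w, u ∈ S → G.Adj u w → w ∈ S := by
    intro u w hu hadj
    simp only [hS, Finset.coe_union, Set.mem_union, Finset.mem_coe] at hu ⊢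
    rcases hu with huA | huN
    · exact Or.inr (mem_nbhd.mpr ⟨u, huA, hadj⟩)
    · -- u ∈ N(A) ⊆ Y, so w ∈ X
      have huY : u ∈ Y := nbhd_subset_Y hbip hA huN
      by_contra hw
      push_neg at hw
      obtain ⟨hwA, hwN⟩ := hw
      -- edge u w lies in a perfect matching M
      obtain ⟨M, hM, he⟩ := hpm s(u, w) ((SimpleGraph.mem_edgeSet G).mpr hadj)
      rw [SimpleGraph.Subgraph.mem_edgeSet] at he
      obtain ⟨p, hp⟩ := partner hM
      have hinj : Set.InjOn p ↑A := by
        intro a _ b _ hab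
        have h1 : a = p (p a) := (hp (p a)).2 a (hp a).1.symm
        have h2 : b = p (p a) := by
          rw [hab]; exact (hp (p b)).2 b (hp b).1.symm
        rw [h1, h2]
      have himg : A.image p = nbhd G A := by
        apply Finset.eq_of_subset_of_card_le
        · intro v hv
          rcases Finset.mem_image.mp hv with ⟨a, ha, rfl⟩
          exact mem_nbhd.mpr ⟨a, ha, M.adj_sub (hp a).1⟩
        · rw [Finset.card_image_of_injOn hinj, hcard]
      have huimg : u ∈ A.image p := himg ▸ huN
      rcases Finset.mem_image.mp huimg with ⟨a, haA, hau⟩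
      -- a is the unique M-partner of u, but so is w
      have : w = a := by
        have h1 : w = p u := (hp u).2 w he
        have h2 : a = p u := (hp u).2 a (hau ▸ (hp a).1).symm
        rw [h1, h2]
      exact hwA (this ▸ haA)
  obtain ⟨a, haA⟩ := hne
  obtain ⟨b, hbX, hbA⟩ := Finset.exists_of_ssubset (lt_of_le_of_ne hA hproper)
  have haS : a ∈ S := by
    simp only [hS, Finset.coe_union, Set.mem_union, Finset.mem_coe]
    exact Or.inl haA
  have hbS : b ∈ S := walk_closed hclosed (hconn.preconnected a b).some haS
  simp only [hS, Finset.coe_union, Set.mem_union, Finset.mem_coe] at hbS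
  rcases hbS with h1 | h1
  · exact hbA h1
  · exact absurd hbX (Finset.disjoint_right.mp hbip.1 (nbhd_subset_Y hbip hA h1))

end Aux2


theorem stmt19 {V : Type*} [Fintype V] (G : SimpleGraph V) (X Y : Finset V)
    (hbip : IsBipartition G X Y) (h2 : TwoConnected G)
    (hpm : ∀ e ∈ G.edgeSet, ∃ M : G.Subgraph, M.IsPerfectMatching ∧ e ∈ M.edgeSet)
    (x y : V) (hx : x ∈ X) (hy : y ∈ Y) :
    ∃ M : (G.induce {v : V | v ≠ x ∧ v ≠ y}).Subgraph, M.IsPerfectMatching := by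
  classical
  have hdisj := hbip.1
  have hxy : x ≠ y := fun h => (Finset.disjoint_left.mp hdisj hx) (h ▸ hy)
  -- G has a perfect matching M0
  obtain ⟨M0, hM0⟩ : ∃ M0 : G.Subgraph, M0.IsPerfectMatching := by
    obtain ⟨p⟩ := h2.1.preconnected x y
    have hnn : ¬ p.Nil := SimpleGraph.Walk.not_nil_of_ne hxy
    have hadj : G.Adj x (p.getVert 1) := SimpleGraph.Walk.adj_snd hnn
    obtain ⟨M0, hM0, -⟩ := hpm s(x, p.getVert 1) ((SimpleGraph.mem_edgeSet G).mpr hadj)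
    exact ⟨M0, hM0⟩
  have cXY : X.card = Y.card := card_X_eq_Y hbip hM0
  -- Hall's condition for the reduced graph
  set t : {a : V // a ∈ X.erase x} → Finset V := fun a => (nbhd G {a.val}).erase y with ht
  have hall : ∀ s : Finset {a : V // a ∈ X.erase x}, s.card ≤ (s.biUnion t).card := by
    intro s
    rcases s.eq_empty_or_nonempty with rfl | hs
    · simp
    set A := s.image Subtype.val with hA
    have hAcard : A.card = s.card := Finset.card_image_of_injective s Subtype.val_injective
    have hAsub : A ⊆ X.erase x := by
      intro v hv
      obtain ⟨a, -, rfl⟩ := Finset.mem_image.mp hv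
      exact a.2
    have hAX : A ⊆ X := hAsub.trans (Finset.erase_subset _ _)
    have hAne : A.Nonempty := hs.image _
    have hAneX : A ≠ X := by
      intro h
      exact Finset.notMem_erase x X (hAsub (h ▸ hx))
    have hstrict := strict_hall hbip h2.1 hpm hM0 hAX hAne hAneX
    have hsubset : (nbhd G A).erase y ⊆ s.biUnion t := by
      intro v hv
      obtain ⟨hvy, hvN⟩ := Finset.mem_erase.mp hv
      obtain ⟨a, haA, hadj⟩ := mem_nbhd.mp hvN
      obtain ⟨b, hb, rfl⟩ := Finset.mem_image.mp haA
      exact Finset.mem_biUnion.mpr ⟨b, hb, Finset.mem_erase.mpr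
        ⟨hvy, mem_nbhd.mpr ⟨b.val, Finset.mem_singleton_self _, hadj⟩⟩⟩
    have h1 := Finset.card_le_card hsubset
    have h2 : (nbhd G A).card - 1 ≤ ((nbhd G A).erase y).card :=
      Finset.pred_card_le_card_erase
    omega
  obtain ⟨f, hfinj, hf⟩ := (Finset.all_card_le_biUnion_card_iff_exists_injective t).mp hall
  have hfadj : ∀ a, G.Adj a.val (f a) := by
    intro a
    obtain ⟨-, hN⟩ := Finset.mem_erase.mp (hf a)
    obtain ⟨b, hb, hadj⟩ := mem_nbhd.mp hN
    rwa [Finset.mem_singleton.mp hb] at hadj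
  have hfny : ∀ a, f a ≠ y := fun a => (Finset.mem_erase.mp (hf a)).1
  have hfY : ∀ a, f a ∈ Y := fun a =>
    adj_mem_Y hbip (hfadj a) (Finset.mem_of_mem_erase a.2)
  have hfnx : ∀ a, f a ≠ x := fun a h =>
    Finset.disjoint_left.mp hdisj hx (h ▸ hfY a)
  have himg : (Finset.univ : Finset {a : V // a ∈ X.erase x}).image f = Y.erase y := by
    apply Finset.eq_of_subset_of_card_le
    · intro v hv
      obtain ⟨a, -, rfl⟩ := Finset.mem_image.mp hv
      exact Finset.mem_erase.mpr ⟨hfny a, hfY a⟩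
    · rw [Finset.card_image_of_injective _ hfinj, Finset.card_univ, Fintype.card_coe,
        Finset.card_erase_of_mem hy, Finset.card_erase_of_mem hx, cXY]
  have hmemXorY : ∀ v : V, v ∈ X ∨ v ∈ Y := by
    intro v
    have : v ∈ X ∪ Y := hbip.2.1 ▸ Finset.mem_univ v
    exact Finset.mem_union.mp this
  refine ⟨{ verts := Set.univ,
              Adj := fun u w => (∃ h : u.val ∈ X.erase x, f ⟨u.val, h⟩ = w.val) ∨
                (∃ h : w.val ∈ X.erase x, f ⟨w.val, h⟩ = u.val),
              adj_sub := ?_,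
              edge_vert := fun _ => Set.mem_univ _,
              symm := ⟨fun u w h => Or.symm h⟩ }, ?_⟩
  · rintro u w (⟨h, e⟩ | ⟨h, e⟩)
    · show G.Adj u.val w.val
      exact e ▸ hfadj ⟨u.val, h⟩
    · show G.Adj u.val w.val
      exact (e ▸ hfadj ⟨w.val, h⟩).symm
  · rw [SimpleGraph.Subgraph.isPerfectMatching_iff]
    intro v
    rcases hmemXorY v.val with hX | hY
    · have hvm : v.val ∈ X.erase x := Finset.mem_erase.mpr ⟨v.2.1, hX⟩
      refine ⟨⟨f ⟨v.val, hvm⟩, ⟨hfnx _, hfny _⟩⟩, Or.inl ⟨hvm, rfl⟩, ?_⟩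
      rintro w' (⟨h, e⟩ | ⟨h, e⟩)
      · exact Subtype.ext e.symm
      · exact absurd hX (Finset.disjoint_right.mp hdisj (e ▸ hfY ⟨w'.val, h⟩))
    · have hvY : v.val ∈ Y.erase y := Finset.mem_erase.mpr ⟨v.2.2, hY⟩
      rw [← himg] at hvY
      obtain ⟨a, -, ha⟩ := Finset.mem_image.mp hvY
      have haX : a.val ∈ X := Finset.mem_of_mem_erase a.2
      have hanx : a.val ≠ x := (Finset.mem_erase.mp a.2).1
      have hany : a.val ≠ y := fun h => Finset.disjoint_left.mp hdisj haX (h ▸ hy)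
      refine ⟨⟨a.val, ⟨hanx, hany⟩⟩, Or.inr ⟨a.2, ha⟩, ?_⟩
      rintro w' (⟨h, e⟩ | ⟨h, e⟩)
      · exact absurd hY (Finset.disjoint_left.mp hdisj (Finset.mem_of_mem_erase h))
      · have hh : (⟨w'.val, h⟩ : {a : V // a ∈ X.erase x}) = a := hfinj (by rw [e, ha])
        have hval : w'.val = a.val := congrArg Subtype.val hh
        exact Subtype.ext hval
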